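/- Let f : ℝⁿ → ℝ be C² and strictly convex with unique minimum point x*, let x₀ ∈ ℝⁿ, t₀ = f(x₀), and suppose all eigenvalues of the Hessian H(f)(y) lie in [α, β] (0 < α ≤ β) for every y ∈ V(t₀) = {y : f(y) ≤ t₀}; set κ = β/α. For x ∈ V(t₀) let x⁺⁺ = x − (1/α)∇f(x) and x⁺ = x − (1/β)∇f(x). Then ‖x* − x⁺⁺‖² ≤ ‖∇f(x)‖²/α² − (2/α)(f(x) − f(x*)) ≤ (‖∇f(x)‖²/α²)(1 − 1/κ) − (2/α)(f(x⁺) − f(x*)). -/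

import Mathlib

open Set RealInnerProductSpace Topology Filter

section AuxBallShrinking

/-- If `φ'' ≤ K` on `[0,T]` then `φ' T ≤ φ' 0 + K*T`. -/
lemma deriv_bound_1d {φ' φ'' : ℝ → ℝ}
    (h2 : ∀ t, HasDerivAt φ' (φ'' t) t) {K T : ℝ} (hT : 0 ≤ T)
    (hK : ∀ t ∈ Icc (0:ℝ) T, φ'' t ≤ K) : φ' T ≤ φ' 0 + K * T := by
  have hψ : ∀ t, HasDerivAt (fun s => φ' s - K * s) (φ'' t - K) t := by
    intro t
    exact ((h2 t).sub ((hasDerivAt_id t).const_mul K)).congr_deriv (by ring)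
  have hanti : AntitoneOn (fun s => φ' s - K * s) (Icc 0 T) := by
    apply antitoneOn_of_deriv_nonpos (convex_Icc 0 T)
    · exact fun t _ => ((hψ t).continuousAt).continuousWithinAt
    · exact fun t _ => ((hψ t).differentiableAt).differentiableWithinAt
    · intro t ht
      rw [(hψ t).deriv]
      have ht' : t ∈ Icc (0:ℝ) T := interior_subset ht
      linarith [hK t ht']
  have := hanti (left_mem_Icc.2 hT) (right_mem_Icc.2 hT) hT
  simp at this
  linarith

/-- Taylor upper bound: if `φ'' ≤ K` on `[0,T]`, `0 ≤ T`, then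
`φ T ≤ φ 0 + T * φ' 0 + K * T^2 / 2`. -/
lemma taylor_upper_1d {φ φ' φ'' : ℝ → ℝ}
    (h1 : ∀ t, HasDerivAt φ (φ' t) t) (h2 : ∀ t, HasDerivAt φ' (φ'' t) t)
    {K T : ℝ} (hT : 0 ≤ T) (hK : ∀ t ∈ Icc (0:ℝ) T, φ'' t ≤ K) :
    φ T ≤ φ 0 + T * φ' 0 + K * T ^ 2 / 2 := by
  have hψ : ∀ t, HasDerivAt (fun s => φ s - s * φ' 0 - K * s ^ 2 / 2)
      (φ' t - φ' 0 - K * t) t := by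
    intro t
    have hp : HasDerivAt (fun s : ℝ => K * s ^ 2 / 2) (K * t) t := by
      have := ((hasDerivAt_pow 2 t).const_mul K).div_const 2
      refine this.congr_deriv ?_
      ring
    have := ((h1 t).sub ((hasDerivAt_id t).mul_const (φ' 0))).sub hp
    refine this.congr_deriv ?_
    ring
  have hanti : AntitoneOn (fun s => φ s - s * φ' 0 - K * s ^ 2 / 2) (Icc 0 T) := by
    apply antitoneOn_of_deriv_nonpos (convex_Icc 0 T)
    · exact fun t _ => ((hψ t).continuousAt).continuousWithinAt
    · exact fun t _ => ((hψ t).differentiableAt).differentiableWithinAt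
    · intro t ht
      rw [(hψ t).deriv]
      have ht' : t ∈ Icc (0:ℝ) T := interior_subset ht
      have hd := deriv_bound_1d h2 ht'.1 (fun s hs => hK s ⟨hs.1, hs.2.trans ht'.2⟩)
      linarith
  have := hanti (left_mem_Icc.2 hT) (right_mem_Icc.2 hT) hT
  simp only at this
  nlinarith

lemma taylor_lower_1d {φ φ' φ'' : ℝ → ℝ}
    (h1 : ∀ t, HasDerivAt φ (φ' t) t) (h2 : ∀ t, HasDerivAt φ' (φ'' t) t)
    {K T : ℝ} (hT : 0 ≤ T) (hK : ∀ t ∈ Icc (0:ℝ) T, K ≤ φ'' t) :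
    φ 0 + T * φ' 0 + K * T ^ 2 / 2 ≤ φ T := by
  have := taylor_upper_1d (φ := fun t => -φ t) (φ' := fun t => -φ' t)
    (φ'' := fun t => -φ'' t) (fun t => (h1 t).neg) (fun t => (h2 t).neg)
    (K := -K) hT (fun t ht => by simpa using hK t ht)
  nlinarith

variable {n : ℕ}
local notation "E" => EuclideanSpace ℝ (Fin n)

lemma line_deriv1 {f : E → ℝ} (hf : ContDiff ℝ 2 f) (x u : E) (t : ℝ) :
    HasDerivAt (fun s => f (x + s • u)) (fderiv ℝ f (x + t • u) u) t := by
  have hc : HasDerivAt (fun s : ℝ => x + s • u) u t := by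
    simpa using ((hasDerivAt_id t).smul_const u).const_add x
  exact ((hf.differentiable (by norm_num)) (x + t • u)).hasFDerivAt.comp_hasDerivAt t hc

lemma line_deriv2 {f : E → ℝ} (hf : ContDiff ℝ 2 f) (x u : E) (t : ℝ) :
    HasDerivAt (fun s => fderiv ℝ f (x + s • u) u)
      (iteratedFDeriv ℝ 2 f (x + t • u) ![u, u]) t := by
  have hc : HasDerivAt (fun s : ℝ => x + s • u) u t := by
    simpa using ((hasDerivAt_id t).smul_const u).const_add x
  have hf' : ContDiff ℝ 1 (fderiv ℝ f) := hf.fderiv_right (by norm_num)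
  have h1 : HasDerivAt (fun s => fderiv ℝ f (x + s • u))
      (fderiv ℝ (fderiv ℝ f) (x + t • u) u) t :=
    ((hf'.differentiable (by norm_num)) (x + t • u)).hasFDerivAt.comp_hasDerivAt t hc
  have h2 := h1.clm_apply (hasDerivAt_const t u)
  simp only [map_zero, add_zero] at h2
  rw [iteratedFDeriv_two_apply]
  exact h2

lemma fderiv_eq_inner_gradient {f : E → ℝ} (hf : ContDiff ℝ 2 f) (x v : E) :
    fderiv ℝ f x v = ⟪gradient f x, v⟫ := by
  have h := ((hf.differentiable (by norm_num)) x).hasGradientAt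
  rw [hasGradientAt_iff_hasFDerivAt] at h
  rw [h.fderiv]
  simp [InnerProductSpace.toDual_apply_apply]

/-- Second directional derivative nonneg everywhere implies segment max bound. -/
lemma segment_le_max {f : E → ℝ} (hf : ContDiff ℝ 2 f)
    (hHess : ∀ x v : E, v ≠ 0 → 0 < iteratedFDeriv ℝ 2 f x ![v, v])
    (a : E) (u : E) {t : ℝ} (ht : t ∈ Icc (0:ℝ) 1) :
    f (a + t • u) ≤ max (f a) (f (a + u)) := by
  by_cases hu : u = 0
  · simp [hu, le_max_left]
  have hconv : ConvexOn ℝ univ (fun s : ℝ => f (a + s • u)) := by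
    apply convexOn_of_hasDerivWithinAt2_nonneg convex_univ
      (f' := fun s => fderiv ℝ f (a + s • u) u)
      (f'' := fun s => iteratedFDeriv ℝ 2 f (a + s • u) ![u, u])
    · exact fun s _ => (line_deriv1 hf a u s).continuousAt.continuousWithinAt
    · exact fun s _ => (line_deriv1 hf a u s).hasDerivWithinAt
    · exact fun s _ => (line_deriv2 hf a u s).hasDerivWithinAt
    · exact fun s _ => (hHess _ u hu).le
  have h01 : t ∈ segment ℝ (0:ℝ) 1 := by
    rw [segment_eq_Icc zero_le_one]; exact ht
  have := hconv.le_on_segment (mem_univ 0) (mem_univ 1) h01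
  simpa using this

lemma exists_lt_of_hasDerivAt_neg {φ : ℝ → ℝ} {d T : ℝ}
    (h : HasDerivAt φ d T) (hd : d < 0) (hT : T < 1) :
    ∃ t ∈ Ioc T 1, φ t < φ T := by
  rw [hasDerivAt_iff_tendsto_slope] at h
  have hs : ∀ᶠ t in 𝓝[≠] T, slope φ T t < 0 := h.eventually_lt_const hd
  have hmono : 𝓝[>] T ≤ 𝓝[≠] T := nhdsWithin_mono T fun t ht => ne_of_gt ht
  have hIoc : Ioc T 1 ∈ 𝓝[>] T := Ioc_mem_nhdsGT_of_mem ⟨le_refl T, hT⟩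
  have hs' : ∀ᶠ t in 𝓝[>] T, slope φ T t < 0 := hs.filter_mono hmono
  have hI' : ∀ᶠ t in 𝓝[>] T, t ∈ Ioc T 1 := eventually_of_mem hIoc fun t ht => ht
  obtain ⟨t, ht1, ht2⟩ := (hs'.and hI').exists
  refine ⟨t, ht2, ?_⟩
  have htT : 0 < t - T := sub_pos.2 ht2.1
  have hneg : (φ t - φ T) / (t - T) < 0 := by
    rw [slope_def_field] at ht1
    simpa [div_eq_inv_mul] using ht1
  rcases div_neg_iff.1 hneg with ⟨_, h⟩ | ⟨h, _⟩
  · linarith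
  · linarith

lemma strong_lower {f : E → ℝ} (hf : ContDiff ℝ 2 f)
    (hHess : ∀ x v : E, v ≠ 0 → 0 < iteratedFDeriv ℝ 2 f x ![v, v])
    (x₀ : E) {α β : ℝ}
    (hEig : ∀ y, f y ≤ f x₀ → ∀ v : E,
      α * ‖v‖ ^ 2 ≤ iteratedFDeriv ℝ 2 f y ![v, v] ∧
      iteratedFDeriv ℝ 2 f y ![v, v] ≤ β * ‖v‖ ^ 2)
    (a b : E) (ha : f a ≤ f x₀) (hb : f b ≤ f x₀) :
    f a + ⟪gradient f a, b - a⟫ + α / 2 * ‖b - a‖ ^ 2 ≤ f b := by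
  set u := b - a with hu
  have hab : a + u = b := by rw [hu]; abel
  have hV : ∀ t ∈ Icc (0:ℝ) 1, f (a + t • u) ≤ f x₀ := by
    intro t ht
    have := segment_le_max hf hHess a u ht
    rw [hab] at this
    exact this.trans (max_le ha hb)
  have hK : ∀ t ∈ Icc (0:ℝ) 1, α * ‖u‖ ^ 2 ≤ iteratedFDeriv ℝ 2 f (a + t • u) ![u, u] :=
    fun t ht => (hEig _ (hV t ht) u).1
  have := taylor_lower_1d (line_deriv1 hf a u) (line_deriv2 hf a u) zero_le_one hK
  simp only [zero_smul, add_zero, one_smul, one_mul, one_pow, mul_one, hab] at this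
  rw [fderiv_eq_inner_gradient hf] at this
  linarith

lemma descent_step {f : E → ℝ} (hf : ContDiff ℝ 2 f)
    (hHess : ∀ x v : E, v ≠ 0 → 0 < iteratedFDeriv ℝ 2 f x ![v, v])
    (x₀ : E) {α β : ℝ} (hα : 0 < α) (hαβ : α ≤ β)
    (hEig : ∀ y, f y ≤ f x₀ → ∀ v : E,
      α * ‖v‖ ^ 2 ≤ iteratedFDeriv ℝ 2 f y ![v, v] ∧
      iteratedFDeriv ℝ 2 f y ![v, v] ≤ β * ‖v‖ ^ 2)
    (a : E) (ha : f a ≤ f x₀) :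
    f (a - (1 / β) • gradient f a) ≤ f a - ‖gradient f a‖ ^ 2 / (2 * β) := by
  have hβ : 0 < β := hα.trans_le hαβ
  set g := gradient f a with hg
  by_cases hg0 : g = 0
  · simp [hg0]
  set u : E := -((1 / β) • g) with hu
  have hend : a + (1:ℝ) • u = a - (1 / β) • g := by rw [hu]; module
  have hGpos : 0 < ‖g‖ ^ 2 := pow_pos (norm_pos_iff.mpr hg0) 2
  have hφ'0 : fderiv ℝ f (a + (0:ℝ) • u) u = -(‖g‖ ^ 2 / β) := by
    rw [zero_smul, add_zero, fderiv_eq_inner_gradient hf, ← hg, hu, inner_neg_right,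
      real_inner_smul_right, real_inner_self_eq_norm_sq]
    ring
  have hKu : β * ‖u‖ ^ 2 = ‖g‖ ^ 2 / β := by
    rw [hu, norm_neg, norm_smul, Real.norm_eq_abs, abs_of_pos (one_div_pos.2 hβ)]
    field_simp
  set A : Set ℝ := {t ∈ Icc (0:ℝ) 1 | f (a + t • u) ≤ f a} with hA
  have hA0 : (0:ℝ) ∈ A := by simp [hA]
  have hbdd : BddAbove A := ⟨1, fun t ht => ht.1.2⟩
  have hcont : Continuous fun t : ℝ => f (a + t • u) :=
    (hf.continuous).comp (by continuity)
  have hclosed : IsClosed A := by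
    have : A = Icc (0:ℝ) 1 ∩ (fun t : ℝ => f (a + t • u)) ⁻¹' Iic (f a) := by
      ext t; simp [hA, And.comm]
    rw [this]
    exact isClosed_Icc.inter (isClosed_Iic.preimage hcont)
  have hcomp : IsCompact A :=
    isCompact_Icc.of_isClosed_subset hclosed (fun t ht => ht.1)
  set T := sSup A with hT
  have hTA : T ∈ A := hcomp.sSup_mem ⟨0, hA0⟩
  have hT01 : T ∈ Icc (0:ℝ) 1 := hTA.1
  have hdown : ∀ s ∈ Icc (0:ℝ) T, f (a + s • u) ≤ f a := by
    intro s hs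
    rcases eq_or_lt_of_le hT01.1 with h0 | hTpos
    · have : s = 0 := le_antisymm (hs.2.trans h0.symm.le) hs.1
      simp [this]
    · have hr : s / T ∈ Icc (0:ℝ) 1 := by
        constructor
        · exact div_nonneg hs.1 (hT01.1)
        · rw [div_le_one hTpos]; exact hs.2
      have := segment_le_max hf hHess a (T • u) hr
      rw [smul_smul, div_mul_cancel₀ _ (ne_of_gt hTpos)] at this
      exact this.trans (max_le le_rfl hTA.2)
  have hV : ∀ s ∈ Icc (0:ℝ) T, f (a + s • u) ≤ f x₀ :=
    fun s hs => (hdown s hs).trans ha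
  have hK : ∀ s ∈ Icc (0:ℝ) T,
      iteratedFDeriv ℝ 2 f (a + s • u) ![u, u] ≤ ‖g‖ ^ 2 / β :=
    fun s hs => (hEig _ (hV s hs) u).2.trans_eq hKu
  have hT1 : T = 1 := by
    by_contra hne
    have hTlt : T < 1 := lt_of_le_of_ne hT01.2 hne
    have hdb := deriv_bound_1d (line_deriv2 hf a u) hT01.1 hK
    rw [hφ'0] at hdb
    have hφ'T : fderiv ℝ f (a + T • u) u < 0 := by
      have h1 : ‖g‖ ^ 2 / β > 0 := by positivity
      nlinarith
    obtain ⟨t, htIoc, hlt⟩ :=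
      exists_lt_of_hasDerivAt_neg (line_deriv1 hf a u T) hφ'T hTlt
    have htA : t ∈ A := by
      refine ⟨⟨hT01.1.trans htIoc.1.le, htIoc.2⟩, ?_⟩
      exact (hlt.le).trans hTA.2
    exact absurd (le_csSup hbdd htA) (not_le.2 htIoc.1)
  have hKfull : ∀ s ∈ Icc (0:ℝ) 1,
      iteratedFDeriv ℝ 2 f (a + s • u) ![u, u] ≤ ‖g‖ ^ 2 / β := by
    rw [← hT1]; exact hK
  have htay := taylor_upper_1d (line_deriv1 hf a u) (line_deriv2 hf a u)
    zero_le_one hKfull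
  rw [hφ'0, hend] at htay
  simp only [zero_smul, add_zero, one_pow, one_mul, mul_one] at htay
  have : ‖g‖ ^ 2 / β / 2 = ‖g‖ ^ 2 / (2 * β) := by ring
  linarith [htay, this.le]

end AuxBallShrinking

/-- With `x⁺⁺ = x - (1/α)∇f(x)`, `x⁺ = x - (1/β)∇f(x)`, `κ = β/α`:
`‖x* - x⁺⁺‖² ≤ ‖∇f x‖²/α² - (2/α)(f x - f x*) ≤ (‖∇f x‖²/α²)(1 - 1/κ) - (2/α)(f x⁺ - f x*)`. -/
theorem ball_shrinking_bound {n : ℕ}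
    (f : EuclideanSpace ℝ (Fin n) → ℝ)
    (hf : ContDiff ℝ 2 f)
    (hHess : ∀ x v : EuclideanSpace ℝ (Fin n), v ≠ 0 →
      0 < iteratedFDeriv ℝ 2 f x ![v, v])
    (xstar : EuclideanSpace ℝ (Fin n))
    (hmin : ∀ y, f xstar ≤ f y)
    (huniq : ∀ y, (∀ z, f y ≤ f z) → y = xstar)
    (x₀ : EuclideanSpace ℝ (Fin n))
    (α β : ℝ) (hα : 0 < α) (hαβ : α ≤ β)
    (hEig : ∀ y, f y ≤ f x₀ → ∀ v : EuclideanSpace ℝ (Fin n),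
      α * ‖v‖ ^ 2 ≤ iteratedFDeriv ℝ 2 f y ![v, v] ∧
      iteratedFDeriv ℝ 2 f y ![v, v] ≤ β * ‖v‖ ^ 2)
    (x : EuclideanSpace ℝ (Fin n)) (hx : f x ≤ f x₀) :
    ‖xstar - (x - (1 / α) • gradient f x)‖ ^ 2 ≤
        ‖gradient f x‖ ^ 2 / α ^ 2 - (2 / α) * (f x - f xstar) ∧
      ‖gradient f x‖ ^ 2 / α ^ 2 - (2 / α) * (f x - f xstar) ≤
        (‖gradient f x‖ ^ 2 / α ^ 2) * (1 - 1 / (β / α)) -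
          (2 / α) * (f (x - (1 / β) • gradient f x) - f xstar) := by
  have hβ : 0 < β := hα.trans_le hαβ
  have hxstarV : f xstar ≤ f x₀ := (hmin x).trans hx
  set g := gradient f x with hg
  have hstrong := strong_lower hf hHess x₀ hEig x xstar hx hxstarV
  have hdesc := descent_step hf hHess x₀ hα hαβ hEig x hx
  set w := xstar - x with hw
  have hinner : ⟪g, w⟫ = ⟪w, g⟫ := real_inner_comm _ _
  constructor
  · have hrw : xstar - (x - (1 / α) • g) = w + (1 / α) • g := by rw [hw]; module
    rw [hrw, norm_add_sq_real, real_inner_smul_right, norm_smul, Real.norm_eq_abs,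
      abs_of_pos (one_div_pos.2 hα)]
    have key : α * ‖w‖ ^ 2 + 2 * ⟪w, g⟫ + 2 * (f x - f xstar) ≤ 0 := by
      rw [← hinner]; linarith [hstrong]
    have h2 : (1 / α) * (α * ‖w‖ ^ 2 + 2 * ⟪w, g⟫ + 2 * (f x - f xstar)) ≤ 0 :=
      mul_nonpos_of_nonneg_of_nonpos (one_div_pos.2 hα).le key
    have expand : (1 / α) * (α * ‖w‖ ^ 2 + 2 * ⟪w, g⟫ + 2 * (f x - f xstar))
        = ‖w‖ ^ 2 + (2 / α) * ⟪w, g⟫ + (2 / α) * (f x - f xstar) := by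
      field_simp
    have e : (1 / α * ‖g‖) ^ 2 = ‖g‖ ^ 2 / α ^ 2 := by
      field_simp
    rw [expand] at h2
    rw [← e]
    ring_nf at h2 ⊢
    linarith [h2]
  · have hdd : 1 / (β / α) = α / β := one_div_div β α
    rw [hdd]
    have h2 : (2 / α) * (f (x - (1 / β) • g) - f x) ≤ (2 / α) * (-(‖g‖ ^ 2 / (2 * β))) := by
      apply mul_le_mul_of_nonneg_left _ (by positivity)
      linarith [hdesc]
    have h3 : (2 / α) * (-(‖g‖ ^ 2 / (2 * β))) = -((‖g‖ ^ 2 / α ^ 2) * (α / β)) := by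
      field_simp
    rw [h3] at h2
    nlinarith [h2]
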